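/- Let f, g : [0,1] → ℝ be continuous functions. Then the upper box-counting dimension of the graph of the product f·g satisfies dim_B̄ G(f·g) ≤ max{dim_B̄ G(f), dim_B̄ G(g)}. -/

import Mathlib

open Set Filter Metric

noncomputable def coverNum {α : Type*} [PseudoMetricSpace α] (F : Set α) (δ : ℝ) : ℕ :=
  sInf {n : ℕ | ∃ t : Finset α, t.card = n ∧ F ⊆ ⋃ p ∈ t, Metric.closedBall p δ}

noncomputable def upperBoxDim {α : Type*} [PseudoMetricSpace α] (F : Set α) : ℝ :=
  Filter.limsup (fun δ : ℝ => Real.log (coverNum F δ) / -Real.log δ)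
    (nhdsWithin (0 : ℝ) (Set.Ioi 0))

noncomputable def lowerBoxDim {α : Type*} [PseudoMetricSpace α] (F : Set α) : ℝ :=
  Filter.liminf (fun δ : ℝ => Real.log (coverNum F δ) / -Real.log δ)
    (nhdsWithin (0 : ℝ) (Set.Ioi 0))

/-- Graph of `f` over the set `X`. -/
def fnGraphOn (f : ℝ → ℝ) (X : Set ℝ) : Set (ℝ × ℝ) := (fun x => (x, f x)) '' X

/-- Graph of `f` over `[0,1]`. -/
def G (f : ℝ → ℝ) : Set (ℝ × ℝ) := fnGraphOn f (Set.Icc 0 1)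



lemma coverNum_spec {α : Type*} [PseudoMetricSpace α] {F : Set α} {δ : ℝ}
    (hF : IsCompact F) (hδ : 0 < δ) :
    ∃ t : Finset α, t.card = coverNum F δ ∧ F ⊆ ⋃ p ∈ t, Metric.closedBall p δ := by
  have h : ∃ s : Set α, s.Finite ∧ F ⊆ ⋃ y ∈ s, Metric.ball y δ := by
    rcases (totallyBounded_iff.1 hF.totallyBounded) δ hδ with ⟨s, hs, hsub⟩
    exact ⟨s, hs, hsub⟩
  rcases h with ⟨s, hs, hsub⟩
  have hne : {n : ℕ | ∃ t : Finset α, t.card = n ∧ F ⊆ ⋃ p ∈ t, Metric.closedBall p δ}.Nonempty := by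
    refine ⟨hs.toFinset.card, hs.toFinset, rfl, hsub.trans ?_⟩
    refine Set.iUnion₂_subset fun y hy => ?_
    exact (Metric.ball_subset_closedBall).trans
      (Set.subset_iUnion₂ (s := fun p _ => Metric.closedBall p δ) y (hs.mem_toFinset.2 hy))
  have := Nat.sInf_mem hne
  exact ⟨this.choose, this.choose_spec.1, this.choose_spec.2⟩

lemma coverNum_le {α : Type*} [PseudoMetricSpace α] {F : Set α} {δ : ℝ}
    (t : Finset α) (h : F ⊆ ⋃ p ∈ t, Metric.closedBall p δ) : coverNum F δ ≤ t.card :=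
  Nat.sInf_le ⟨t, rfl, h⟩

lemma length_le_of_cover {β : Type*} {t : Finset β} {c : β → ℝ} {a b δ : ℝ} (hδ : 0 ≤ δ)
    (h : Set.Icc a b ⊆ ⋃ p ∈ t, Set.Icc (c p - δ) (c p + δ)) :
    b - a ≤ 2 * δ * t.card := by
  have h1 : MeasureTheory.volume (Set.Icc a b) ≤ ∑ p ∈ t, MeasureTheory.volume (Set.Icc (c p - δ) (c p + δ)) :=
    le_trans (MeasureTheory.measure_mono h) (MeasureTheory.measure_biUnion_finset_le t _)
  rw [Real.volume_Icc] at h1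
  have h2 : ∀ p ∈ t, MeasureTheory.volume (Set.Icc (c p - δ) (c p + δ)) = ENNReal.ofReal (2*δ) := by
    intro p _; rw [Real.volume_Icc]; ring_nf
  rw [Finset.sum_congr rfl h2, Finset.sum_const, nsmul_eq_mul] at h1
  have h3 : (t.card : ENNReal) * ENNReal.ofReal (2*δ) = ENNReal.ofReal (2 * δ * (t.card:ℝ)) := by
    rw [← ENNReal.ofReal_natCast, ← ENNReal.ofReal_mul (by positivity)]
    ring_nf
  rw [h3] at h1
  exact (ENNReal.ofReal_le_ofReal_iff (by positivity)).1 h1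


def colSet (δ : ℝ) (j : ℕ) : Set ℝ := Set.Icc ((j:ℝ)*δ) (((j:ℝ)+1)*δ) ∩ Set.Icc 0 1

lemma colSet_subset (δ : ℝ) (j : ℕ) : colSet δ j ⊆ Set.Icc 0 1 := Set.inter_subset_right

lemma colSet_compact (δ : ℝ) (j : ℕ) : IsCompact (colSet δ j) :=
  isCompact_Icc.inter_left isClosed_Icc

lemma colSet_preconnected (δ : ℝ) (j : ℕ) : IsPreconnected (colSet δ j) := by
  have : (colSet δ j).OrdConnected := Set.OrdConnected.inter Set.ordConnected_Icc Set.ordConnected_Icc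
  exact this.isPreconnected

lemma G_compact {h : ℝ → ℝ} (hc : ContinuousOn h (Set.Icc 0 1)) : IsCompact (G h) :=
  isCompact_Icc.image_of_continuousOn (continuousOn_id.prodMk hc)

lemma G_nonempty (h : ℝ → ℝ) : (G h).Nonempty :=
  ⟨(0, h 0), ⟨0, by simp, rfl⟩⟩

open scoped Classical in
noncomputable def Sfin (h : ℝ → ℝ) (δ : ℝ) (t : Finset (ℝ×ℝ)) (j : ℕ) : Finset (ℝ×ℝ) :=
  t.filter fun p => ∃ x ∈ colSet δ j, dist (x, h x) p ≤ δ

lemma col_osc_le {h : ℝ → ℝ} (hc : ContinuousOn h (Set.Icc 0 1)) {δ : ℝ} (hδ : 0 < δ)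
    {t : Finset (ℝ×ℝ)} (ht : G h ⊆ ⋃ p ∈ t, Metric.closedBall p δ) (j : ℕ) :
    sSup (h '' colSet δ j) - sInf (h '' colSet δ j) ≤ 2 * δ * (Sfin h δ t j).card := by
  classical
  set E := colSet δ j with hE
  rcases E.eq_empty_or_nonempty with he | hne
  · rw [he]; simp [Real.sSup_empty, Real.sInf_empty]; positivity
  · have hEc : IsCompact E := colSet_compact δ j
    have hEsub : E ⊆ Set.Icc 0 1 := colSet_subset δ j
    have hKc : IsCompact (h '' E) := hEc.image_of_continuousOn (hc.mono hEsub)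
    have hKne : (h '' E).Nonempty := hne.image h
    have hKpre : IsPreconnected (h '' E) :=
      (colSet_preconnected δ j).image h (hc.mono hEsub)
    have hm : sInf (h '' E) ∈ h '' E := hKc.sInf_mem hKne
    have hM : sSup (h '' E) ∈ h '' E := hKc.sSup_mem hKne
    have hIcc : Set.Icc (sInf (h '' E)) (sSup (h '' E)) ⊆ h '' E := hKpre.Icc_subset hm hM
    have hcov : Set.Icc (sInf (h '' E)) (sSup (h '' E)) ⊆
        ⋃ p ∈ Sfin h δ t j, Set.Icc (p.2 - δ) (p.2 + δ) := by
      intro y hy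
      rcases hIcc hy with ⟨x, hxE, hxy⟩
      have hxG : (x, h x) ∈ G h := ⟨x, hEsub hxE, rfl⟩
      rcases Set.mem_iUnion₂.1 (ht hxG) with ⟨p, hp, hd⟩
      rw [Metric.mem_closedBall] at hd
      have hpS : p ∈ Sfin h δ t j := Finset.mem_filter.2 ⟨hp, x, hxE, hd⟩
      have h2 : dist (h x) p.2 ≤ δ := by
        have hpe : dist (x, h x) p = max (dist x p.1) (dist (h x) p.2) := Prod.dist_eq
        exact le_trans (le_max_right _ _) (hpe ▸ hd)
      rw [Real.dist_eq, abs_sub_le_iff] at h2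
      refine Set.mem_iUnion₂.2 ⟨p, hpS, ?_⟩
      constructor <;> [linarith [hxy ▸ h2.2]; linarith [hxy ▸ h2.1]]
    exact length_le_of_cover (le_of_lt hδ) hcov

lemma sum_card_Sfin_le {h : ℝ → ℝ} {δ : ℝ} (hδ : 0 < δ) (t : Finset (ℝ×ℝ)) (J : ℕ) :
    ∑ j ∈ Finset.range J, (Sfin h δ t j).card ≤ 4 * t.card := by
  classical
  have hswap : ∑ j ∈ Finset.range J, (Sfin h δ t j).card
      = ∑ p ∈ t, ((Finset.range J).filter
          (fun j => ∃ x ∈ colSet δ j, dist (x, h x) p ≤ δ)).card := by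
    simp only [Sfin, Finset.card_filter]
    exact Finset.sum_comm
  rw [hswap]
  have hb : ∀ p ∈ t, ((Finset.range J).filter
      (fun j => ∃ x ∈ colSet δ j, dist (x, h x) p ≤ δ)).card ≤ 4 := by
    intro p _
    set a := ⌊(p.1 + δ)/δ⌋₊ with ha
    have hsub : ((Finset.range J).filter
        (fun j => ∃ x ∈ colSet δ j, dist (x, h x) p ≤ δ)) ⊆ Finset.Icc (a - 3) a := by
      intro j hj
      rcases Finset.mem_filter.1 hj with ⟨-, x, hxE, hd⟩
      rcases hxE with ⟨⟨hx1, hx2⟩, -⟩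
      have h1 : dist x p.1 ≤ δ := by
        have hpe : dist (x, h x) p = max (dist x p.1) (dist (h x) p.2) := Prod.dist_eq
        exact le_trans (le_max_left _ _) (hpe ▸ hd)
      rw [Real.dist_eq, abs_sub_le_iff] at h1
      have hju : (j : ℝ) ≤ (p.1 + δ)/δ := by
        rw [le_div_iff₀ hδ]; linarith
      have hja : j ≤ a := Nat.le_floor hju
      have hnn : 0 ≤ (p.1 + δ)/δ := le_trans (Nat.cast_nonneg j) hju
      have hfl : (a : ℝ) ≤ (p.1 + δ)/δ := Nat.floor_le hnn
      rw [le_div_iff₀ hδ] at hfl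
      have hlow : (a : ℝ) ≤ (j : ℝ) + 3 := by
        have : ((j:ℝ)+3)*δ ≥ (a:ℝ)*δ := by nlinarith
        exact le_of_mul_le_mul_right (by linarith) hδ
      have : a ≤ j + 3 := by exact_mod_cast (by push_cast; linarith : (a:ℝ) ≤ ((j+3:ℕ):ℝ))
      exact Finset.mem_Icc.2 ⟨by omega, hja⟩
    calc ((Finset.range J).filter _).card ≤ (Finset.Icc (a-3) a).card := Finset.card_le_card hsub
      _ = a + 1 - (a - 3) := Nat.card_Icc _ _
      _ ≤ 4 := by omega
  calc ∑ p ∈ t, _ ≤ ∑ p ∈ t, 4 := Finset.sum_le_sum hb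
    _ = 4 * t.card := by rw [Finset.sum_const]; ring

lemma sum_osc_le {h : ℝ → ℝ} (hc : ContinuousOn h (Set.Icc 0 1)) {δ : ℝ} (hδ : 0 < δ)
    {t : Finset (ℝ×ℝ)} (ht : G h ⊆ ⋃ p ∈ t, Metric.closedBall p δ) (J : ℕ) :
    ∑ j ∈ Finset.range J, (sSup (h '' colSet δ j) - sInf (h '' colSet δ j))
      ≤ 8 * δ * t.card := by
  calc ∑ j ∈ Finset.range J, (sSup (h '' colSet δ j) - sInf (h '' colSet δ j))
      ≤ ∑ j ∈ Finset.range J, 2 * δ * ((Sfin h δ t j).card : ℝ) :=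
        Finset.sum_le_sum fun j _ => col_osc_le hc hδ ht j
    _ = 2 * δ * ((∑ j ∈ Finset.range J, (Sfin h δ t j).card : ℕ) : ℝ) := by
        rw [← Finset.mul_sum]; push_cast; ring
    _ ≤ 2 * δ * ((4 * t.card : ℕ) : ℝ) := by
        have := sum_card_Sfin_le (h := h) hδ t J
        gcongr
    _ = 8 * δ * t.card := by push_cast; ring

lemma coverNum_le_sum_osc {h : ℝ → ℝ} (hc : ContinuousOn h (Set.Icc 0 1)) {δ : ℝ} (hδ : 0 < δ) :
    coverNum (G h) δ ≤ ∑ j ∈ Finset.range (⌊1/δ⌋₊ + 1),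
      (⌊(sSup (h '' colSet δ j) - sInf (h '' colSet δ j))/(2*δ)⌋₊ + 1) := by
  classical
  set J := ⌊1/δ⌋₊ + 1 with hJ
  set m : ℕ → ℝ := fun j => sInf (h '' colSet δ j) with hm
  set K : ℕ → ℕ := fun j => ⌊(sSup (h '' colSet δ j) - m j)/(2*δ)⌋₊ + 1 with hK
  set T : Finset (ℝ × ℝ) := (Finset.range J).biUnion (fun j =>
    (Finset.range (K j)).image (fun k : ℕ => (((j:ℝ)*δ + δ/2), m j + (2*(k:ℝ)+1)*δ))) with hT
  have hcov : G h ⊆ ⋃ p ∈ T, Metric.closedBall p δ := by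
    rintro - ⟨x, hx, rfl⟩
    have hx0 : (0:ℝ) ≤ x := hx.1
    have hx1 : x ≤ 1 := hx.2
    set j := ⌊x/δ⌋₊ with hj
    have hjJ : j < J := by
      have : j ≤ ⌊1/δ⌋₊ := Nat.floor_mono (by gcongr)
      omega
    have hjx : (j:ℝ) * δ ≤ x := by
      have := Nat.floor_le (by positivity : (0:ℝ) ≤ x/δ)
      calc (j:ℝ) * δ ≤ (x/δ) * δ := by gcongr
        _ = x := by field_simp
    have hxj : x ≤ ((j:ℝ)+1) * δ := by
      have := Nat.lt_floor_add_one (x/δ)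
      have h2 : x/δ < (j:ℝ) + 1 := by exact_mod_cast this
      rw [div_lt_iff₀ hδ] at h2
      nlinarith
    have hxE : x ∈ colSet δ j := ⟨⟨hjx, hxj⟩, hx⟩
    have hEc : IsCompact (h '' colSet δ j) :=
      (colSet_compact δ j).image_of_continuousOn (hc.mono (colSet_subset δ j))
    have hmem : h x ∈ h '' colSet δ j := ⟨x, hxE, rfl⟩
    have hlb : m j ≤ h x := csInf_le hEc.bddBelow hmem
    have hub : h x ≤ sSup (h '' colSet δ j) := le_csSup hEc.bddAbove hmem
    set k := ⌊(h x - m j)/(2*δ)⌋₊ with hk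
    have hkK : k < K j := by
      have : k ≤ ⌊(sSup (h '' colSet δ j) - m j)/(2*δ)⌋₊ := Nat.floor_mono (by gcongr)
      show k < ⌊(sSup (h '' colSet δ j) - m j)/(2*δ)⌋₊ + 1
      omega
    refine Set.mem_iUnion₂.2 ⟨(((j:ℝ)*δ + δ/2), m j + (2*(k:ℝ)+1)*δ), ?_, ?_⟩
    · exact Finset.mem_biUnion.2 ⟨j, Finset.mem_range.2 hjJ,
        Finset.mem_image.2 ⟨k, Finset.mem_range.2 hkK, rfl⟩⟩
    · rw [Metric.mem_closedBall]
      have hd1 : dist x ((j:ℝ)*δ + δ/2) ≤ δ := by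
        rw [Real.dist_eq, abs_sub_le_iff]; constructor <;> nlinarith
      have hd2 : dist (h x) (m j + (2*(k:ℝ)+1)*δ) ≤ δ := by
        have hfl : (k:ℝ) ≤ (h x - m j)/(2*δ) := Nat.floor_le (div_nonneg (by linarith) (by positivity))
        have hfu : (h x - m j)/(2*δ) < (k:ℝ) + 1 := by
          exact_mod_cast Nat.lt_floor_add_one ((h x - m j)/(2*δ))
        rw [le_div_iff₀ (by positivity)] at hfl
        rw [div_lt_iff₀ (by positivity)] at hfu
        rw [Real.dist_eq, abs_sub_le_iff]; constructor <;> nlinarith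
      have hpe : dist (x, h x) (((j:ℝ)*δ + δ/2), m j + (2*(k:ℝ)+1)*δ)
          = max (dist x ((j:ℝ)*δ + δ/2)) (dist (h x) (m j + (2*(k:ℝ)+1)*δ)) := Prod.dist_eq
      rw [hpe]; exact max_le hd1 hd2
  calc coverNum (G h) δ ≤ T.card := coverNum_le T hcov
    _ ≤ ∑ j ∈ Finset.range J, ((Finset.range (K j)).image
          (fun k : ℕ => (((j:ℝ)*δ + δ/2), m j + (2*(k:ℝ)+1)*δ))).card := Finset.card_biUnion_le
    _ ≤ ∑ j ∈ Finset.range J, K j := Finset.sum_le_sum fun j _ =>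
          le_trans Finset.card_image_le (le_of_eq (Finset.card_range _))

lemma one_le_graph_cover {h : ℝ → ℝ} {δ : ℝ} (hδ : 0 < δ) {t : Finset (ℝ×ℝ)}
    (ht : G h ⊆ ⋃ p ∈ t, Metric.closedBall p δ) : (1:ℝ) ≤ 2*δ*t.card := by
  have hcov : Set.Icc (0:ℝ) 1 ⊆ ⋃ p ∈ t, Set.Icc (p.1 - δ) (p.1 + δ) := by
    intro x hx
    rcases Set.mem_iUnion₂.1 (ht ⟨x, hx, rfl⟩) with ⟨p, hp, hd⟩
    rw [Metric.mem_closedBall] at hd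
    have h1 : dist x p.1 ≤ δ := by
      have hpe : dist (x, h x) p = max (dist x p.1) (dist (h x) p.2) := Prod.dist_eq
      exact le_trans (le_max_left _ _) (hpe ▸ hd)
    rw [Real.dist_eq, abs_sub_le_iff] at h1
    exact Set.mem_iUnion₂.2 ⟨p, hp, by constructor <;> linarith⟩
  have := length_le_of_cover (le_of_lt hδ) hcov
  linarith

lemma one_le_coverNum {h : ℝ → ℝ} (hc : ContinuousOn h (Set.Icc 0 1)) {δ : ℝ} (hδ : 0 < δ) :
    1 ≤ coverNum (G h) δ := by
  rcases coverNum_spec (G_compact hc) hδ with ⟨t, hcard, hcov⟩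
  by_contra hlt
  push_neg at hlt
  interval_cases hn : coverNum (G h) δ
  · rw [Finset.card_eq_zero] at hcard
    rcases G_nonempty h with ⟨q, hq⟩
    have := hcov hq
    simp [hcard] at this

lemma osc_nonneg {h : ℝ → ℝ} (hc : ContinuousOn h (Set.Icc 0 1)) {δ : ℝ} (j : ℕ) :
    0 ≤ sSup (h '' colSet δ j) - sInf (h '' colSet δ j) := by
  rcases (colSet δ j).eq_empty_or_nonempty with he | hne
  · simp [he, Real.sSup_empty, Real.sInf_empty]
  · have hEc : IsCompact (h '' colSet δ j) :=
      (colSet_compact δ j).image_of_continuousOn (hc.mono (colSet_subset δ j))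
    have hKne : (h '' colSet δ j).Nonempty := hne.image h
    have := csInf_le_csSup hKne hEc.bddBelow hEc.bddAbove
    linarith

lemma osc_mul_le {f g : ℝ → ℝ} (hf : ContinuousOn f (Set.Icc 0 1))
    (hg : ContinuousOn g (Set.Icc 0 1)) {B : ℝ}
    (hBf : ∀ x ∈ Set.Icc (0:ℝ) 1, |f x| ≤ B) (hBg : ∀ x ∈ Set.Icc (0:ℝ) 1, |g x| ≤ B)
    {δ : ℝ} (j : ℕ) :
    sSup ((f*g) '' colSet δ j) - sInf ((f*g) '' colSet δ j) ≤
      B * (sSup (f '' colSet δ j) - sInf (f '' colSet δ j))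
      + B * (sSup (g '' colSet δ j) - sInf (g '' colSet δ j)) := by
  have hfg : ContinuousOn (f*g) (Set.Icc 0 1) := hf.mul hg
  rcases (colSet δ j).eq_empty_or_nonempty with he | hne
  · simp [he, Real.sSup_empty, Real.sInf_empty]
  · have hEsub : colSet δ j ⊆ Set.Icc 0 1 := colSet_subset δ j
    have hcf : IsCompact (f '' colSet δ j) :=
      (colSet_compact δ j).image_of_continuousOn (hf.mono hEsub)
    have hcg : IsCompact (g '' colSet δ j) :=
      (colSet_compact δ j).image_of_continuousOn (hg.mono hEsub)
    have hcfg : IsCompact ((f*g) '' colSet δ j) :=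
      (colSet_compact δ j).image_of_continuousOn (hfg.mono hEsub)
    rcases hcfg.sSup_mem (hne.image _) with ⟨x1, hx1, hsup⟩
    rcases hcfg.sInf_mem (hne.image _) with ⟨x2, hx2, hinf⟩
    have key : ∀ u ∈ colSet δ j, ∀ v ∈ colSet δ j,
        f u * g u - f v * g v ≤
          B * (sSup (f '' colSet δ j) - sInf (f '' colSet δ j))
          + B * (sSup (g '' colSet δ j) - sInf (g '' colSet δ j)) := by
      intro u hu v hv
      have h1 : f u * g u - f v * g v = f u * (g u - g v) + g v * (f u - f v) := by ring
      have hgu : g u ≤ sSup (g '' colSet δ j) := le_csSup hcg.bddAbove ⟨u, hu, rfl⟩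
      have hgv : sInf (g '' colSet δ j) ≤ g v := csInf_le hcg.bddBelow ⟨v, hv, rfl⟩
      have hfu : f u ≤ sSup (f '' colSet δ j) := le_csSup hcf.bddAbove ⟨u, hu, rfl⟩
      have hfv : sInf (f '' colSet δ j) ≤ f v := csInf_le hcf.bddBelow ⟨v, hv, rfl⟩
      have hbu : |f u| ≤ B := hBf u (hEsub hu)
      have hbv : |g v| ≤ B := hBg v (hEsub hv)
      have e1 : f u * (g u - g v) ≤ B * (sSup (g '' colSet δ j) - sInf (g '' colSet δ j)) := by
        calc f u * (g u - g v) ≤ |f u * (g u - g v)| := le_abs_self _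
          _ = |f u| * |g u - g v| := abs_mul _ _
          _ ≤ B * (sSup (g '' colSet δ j) - sInf (g '' colSet δ j)) := by
              apply mul_le_mul hbu ?_ (abs_nonneg _) (le_trans (abs_nonneg _) hbu)
              rw [abs_sub_le_iff]
              have hgv' : g v ≤ sSup (g '' colSet δ j) := le_csSup hcg.bddAbove ⟨v, hv, rfl⟩
              have hgu' : sInf (g '' colSet δ j) ≤ g u := csInf_le hcg.bddBelow ⟨u, hu, rfl⟩
              constructor <;> linarith
      have e2 : g v * (f u - f v) ≤ B * (sSup (f '' colSet δ j) - sInf (f '' colSet δ j)) := by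
        calc g v * (f u - f v) ≤ |g v * (f u - f v)| := le_abs_self _
          _ = |g v| * |f u - f v| := abs_mul _ _
          _ ≤ B * (sSup (f '' colSet δ j) - sInf (f '' colSet δ j)) := by
              apply mul_le_mul hbv ?_ (abs_nonneg _) (le_trans (abs_nonneg _) hbv)
              rw [abs_sub_le_iff]
              have hfv' : f v ≤ sSup (f '' colSet δ j) := le_csSup hcf.bddAbove ⟨v, hv, rfl⟩
              have hfu' : sInf (f '' colSet δ j) ≤ f u := csInf_le hcf.bddBelow ⟨u, hu, rfl⟩
              constructor <;> linarith
      linarith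
    have := key x1 hx1 x2 hx2
    have hx1' : (f*g) x1 = f x1 * g x1 := rfl
    have hx2' : (f*g) x2 = f x2 * g x2 := rfl
    rw [← hsup, ← hinf]
    simpa [hx1', hx2'] using this

lemma cover_mul_le {f g : ℝ → ℝ} (hf : ContinuousOn f (Set.Icc 0 1))
    (hg : ContinuousOn g (Set.Icc 0 1)) {B : ℝ}
    (hBf : ∀ x ∈ Set.Icc (0:ℝ) 1, |f x| ≤ B) (hBg : ∀ x ∈ Set.Icc (0:ℝ) 1, |g x| ≤ B)
    (hB1 : 1 ≤ B) {δ : ℝ} (hδ : 0 < δ) :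
    (coverNum (G (f*g)) δ : ℝ) ≤
      (4*B+3) * ((coverNum (G f) δ : ℝ) + (coverNum (G g) δ : ℝ)) := by
  have hfg : ContinuousOn (f*g) (Set.Icc 0 1) := hf.mul hg
  obtain ⟨tf, htfc, htf⟩ := coverNum_spec (G_compact hf) hδ
  obtain ⟨tg, htgc, htg⟩ := coverNum_spec (G_compact hg) hδ
  set n : ℝ := (coverNum (G f) δ : ℝ) with hn
  set m : ℝ := (coverNum (G g) δ : ℝ) with hm
  have hn1 : (1:ℝ) ≤ n := by rw [hn]; exact_mod_cast one_le_coverNum hf hδ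
  have hm0 : (0:ℝ) ≤ m := Nat.cast_nonneg _
  have h2dn : (1:ℝ) ≤ 2*δ*n := by
    have := one_le_graph_cover hδ htf; rw [htfc] at this; exact this
  set J := ⌊1/δ⌋₊ + 1 with hJ
  set osc : (ℝ → ℝ) → ℕ → ℝ :=
    fun h j => sSup (h '' colSet δ j) - sInf (h '' colSet δ j) with hosc
  have step1 : (coverNum (G (f*g)) δ : ℝ) ≤
      ∑ j ∈ Finset.range J, ((⌊osc (f*g) j / (2*δ)⌋₊ : ℝ) + 1) := by
    have := coverNum_le_sum_osc hfg hδ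
    calc (coverNum (G (f*g)) δ : ℝ)
        ≤ ((∑ j ∈ Finset.range J, (⌊osc (f*g) j/(2*δ)⌋₊ + 1) : ℕ) : ℝ) := by exact_mod_cast this
      _ = ∑ j ∈ Finset.range J, ((⌊osc (f*g) j / (2*δ)⌋₊ : ℝ) + 1) := by push_cast; ring
  have step2 : ∑ j ∈ Finset.range J, ((⌊osc (f*g) j / (2*δ)⌋₊ : ℝ) + 1)
      ≤ (∑ j ∈ Finset.range J, osc (f*g) j) / (2*δ) + (J:ℝ) := by
    have : ∀ j ∈ Finset.range J, ((⌊osc (f*g) j / (2*δ)⌋₊ : ℝ) + 1) ≤ osc (f*g) j / (2*δ) + 1 := by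
      intro j _
      have h0 : 0 ≤ osc (f*g) j / (2*δ) := div_nonneg (osc_nonneg hfg j) (by positivity)
      have := Nat.floor_le h0
      linarith
    calc ∑ j ∈ Finset.range J, ((⌊osc (f*g) j / (2*δ)⌋₊ : ℝ) + 1)
        ≤ ∑ j ∈ Finset.range J, (osc (f*g) j / (2*δ) + 1) := Finset.sum_le_sum this
      _ = (∑ j ∈ Finset.range J, osc (f*g) j) / (2*δ) + (J:ℝ) := by
          rw [Finset.sum_add_distrib, ← Finset.sum_div]; simp
  have step3 : ∑ j ∈ Finset.range J, osc (f*g) j ≤ B * (8*δ*n) + B * (8*δ*m) := by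
    have hsf : ∑ j ∈ Finset.range J, osc f j ≤ 8*δ*n := by
      have := sum_osc_le hf hδ htf J; rw [htfc] at this; exact this
    have hsg : ∑ j ∈ Finset.range J, osc g j ≤ 8*δ*m := by
      have := sum_osc_le hg hδ htg J; rw [htgc] at this; exact this
    have hof : ∀ j, 0 ≤ osc f j := fun j => osc_nonneg hf j
    have hog : ∀ j, 0 ≤ osc g j := fun j => osc_nonneg hg j
    calc ∑ j ∈ Finset.range J, osc (f*g) j
        ≤ ∑ j ∈ Finset.range J, (B * osc f j + B * osc g j) :=
          Finset.sum_le_sum fun j _ => osc_mul_le hf hg hBf hBg j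
      _ = B * (∑ j ∈ Finset.range J, osc f j) + B * (∑ j ∈ Finset.range J, osc g j) := by
          rw [Finset.sum_add_distrib, Finset.mul_sum, Finset.mul_sum]
      _ ≤ B * (8*δ*n) + B * (8*δ*m) := by
          have hB0 : (0:ℝ) ≤ B := by linarith
          gcongr
  have stepJ : (J:ℝ) ≤ 3 * n := by
    have h1 : ((⌊1/δ⌋₊:ℝ)) ≤ 1/δ := Nat.floor_le (by positivity)
    have h2 : 1/δ ≤ 2*n := by
      rw [div_le_iff₀ hδ]; linarith [h2dn]
    have : (J:ℝ) = (⌊1/δ⌋₊:ℝ) + 1 := by exact_mod_cast rfl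
    rw [this]; linarith
  have main : (coverNum (G (f*g)) δ : ℝ) ≤ 4*B*(n+m) + 3*n := by
    have hd : (B * (8*δ*n) + B * (8*δ*m)) / (2*δ) = 4*B*(n+m) := by
      field_simp; ring
    have := le_trans step1 (le_trans step2 (by
      have hmono : (∑ j ∈ Finset.range J, osc (f*g) j) / (2*δ) + (J:ℝ)
          ≤ (B * (8*δ*n) + B * (8*δ*m)) / (2*δ) + 3*n := by
        gcongr
      exact hmono))
    rw [hd] at this; exact this
  calc (coverNum (G (f*g)) δ : ℝ) ≤ 4*B*(n+m) + 3*n := main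
    _ ≤ (4*B+3) * (n + m) := by nlinarith

lemma osc_le_two_bound {h : ℝ → ℝ} {B : ℝ}
    (hB : ∀ x ∈ Set.Icc (0:ℝ) 1, |h x| ≤ B) (hB0 : 0 ≤ B) {δ : ℝ} (j : ℕ) :
    sSup (h '' colSet δ j) - sInf (h '' colSet δ j) ≤ 2 * B := by
  rcases (colSet δ j).eq_empty_or_nonempty with he | hne
  · simp [he, Real.sSup_empty, Real.sInf_empty]; positivity
  · have h1 : sSup (h '' colSet δ j) ≤ B := by
      apply Real.sSup_le _ (le_trans (by linarith) (le_refl B))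
      rintro y ⟨x, hx, rfl⟩
      exact le_trans (le_abs_self _) (hB x (colSet_subset δ j hx))
    have h2 : -B ≤ sInf (h '' colSet δ j) := by
      apply Real.le_sInf _ (by linarith : -B ≤ 0)
      rintro y ⟨x, hx, rfl⟩
      have := hB x (colSet_subset δ j hx)
      rw [abs_le] at this; exact this.1
    linarith

lemma coverNum_upper {h : ℝ → ℝ} (hc : ContinuousOn h (Set.Icc 0 1)) {B : ℝ}
    (hB : ∀ x ∈ Set.Icc (0:ℝ) 1, |h x| ≤ B) (hB1 : 1 ≤ B) {δ : ℝ}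
    (hδ0 : 0 < δ) (hδ1 : δ ≤ 1) :
    (coverNum (G h) δ : ℝ) ≤ 8 * B / δ^2 := by
  have hstep := coverNum_le_sum_osc hc hδ0
  set J := ⌊1/δ⌋₊ + 1 with hJ
  have hterm : ∀ j ∈ Finset.range J,
      ((⌊(sSup (h '' colSet δ j) - sInf (h '' colSet δ j))/(2*δ)⌋₊ : ℝ) + 1) ≤ 2*B/δ := by
    intro j _
    have hosc := osc_le_two_bound hB (by linarith) (δ := δ) j
    have h0 : (0:ℝ) ≤ (sSup (h '' colSet δ j) - sInf (h '' colSet δ j))/(2*δ) := by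
      rcases (colSet δ j).eq_empty_or_nonempty with he | hne
      · simp [he, Real.sSup_empty, Real.sInf_empty]
      · have hEc : IsCompact (h '' colSet δ j) :=
          (colSet_compact δ j).image_of_continuousOn (hc.mono (colSet_subset δ j))
        have := csInf_le_csSup (hne.image h) hEc.bddBelow hEc.bddAbove
        apply div_nonneg (by linarith) (by positivity)
    have hfl := Nat.floor_le h0
    have hd : (sSup (h '' colSet δ j) - sInf (h '' colSet δ j))/(2*δ) ≤ B/δ := by
      rw [div_le_div_iff₀ (by positivity) hδ0]
      nlinarith
    have hB2 : 1 ≤ B/δ := by rw [le_div_iff₀ hδ0]; linarith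
    have : 2*B/δ = B/δ + B/δ := by ring
    rw [this]
    linarith
  have hsum : (coverNum (G h) δ : ℝ) ≤ (J:ℝ) * (2*B/δ) := by
    calc (coverNum (G h) δ : ℝ)
        ≤ ((∑ j ∈ Finset.range J,
            (⌊(sSup (h '' colSet δ j) - sInf (h '' colSet δ j))/(2*δ)⌋₊ + 1) : ℕ) : ℝ) := by
          exact_mod_cast hstep
      _ = ∑ j ∈ Finset.range J,
            ((⌊(sSup (h '' colSet δ j) - sInf (h '' colSet δ j))/(2*δ)⌋₊ : ℝ) + 1) := by
          push_cast; ring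
      _ ≤ ∑ _j ∈ Finset.range J, (2*B/δ) := Finset.sum_le_sum hterm
      _ = (J:ℝ) * (2*B/δ) := by rw [Finset.sum_const, Finset.card_range, nsmul_eq_mul]
  have hJle : (J:ℝ) ≤ 2/δ := by
    have h1 : ((⌊1/δ⌋₊:ℝ)) ≤ 1/δ := Nat.floor_le (by positivity)
    have h2 : (1:ℝ) ≤ 1/δ := by rw [le_div_iff₀ hδ0]; linarith
    have : (J:ℝ) = (⌊1/δ⌋₊:ℝ) + 1 := by exact_mod_cast rfl
    rw [this, show (2:ℝ)/δ = 1/δ + 1/δ by ring]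
    linarith
  calc (coverNum (G h) δ : ℝ) ≤ (J:ℝ) * (2*B/δ) := hsum
    _ ≤ (2/δ) * (2*B/δ) := by
        apply mul_le_mul_of_nonneg_right hJle (by positivity)
    _ ≤ 8 * B / δ^2 := by
        rw [div_mul_div_comm, div_le_div_iff₀ (by positivity) (by positivity)]
        ring_nf
        nlinarith [sq_nonneg δ]

lemma ev_base : ∀ᶠ δ in nhdsWithin (0:ℝ) (Set.Ioi 0), 0 < δ ∧ δ < 1/2 := by
  have h1 : ∀ᶠ δ in nhdsWithin (0:ℝ) (Set.Ioi 0), 0 < δ :=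
    eventually_mem_nhdsWithin.mono (fun x hx => hx)
  have h2 : ∀ᶠ δ in nhds (0:ℝ), δ < 1/2 := eventually_lt_nhds (by norm_num)
  exact h1.and (h2.filter_mono nhdsWithin_le_nhds)

lemma ev_nonneg {h : ℝ → ℝ} (hc : ContinuousOn h (Set.Icc 0 1)) :
    ∀ᶠ δ in nhdsWithin (0:ℝ) (Set.Ioi 0),
      0 ≤ Real.log (coverNum (G h) δ) / (-Real.log δ) := by
  filter_upwards [ev_base] with δ ⟨hδ0, hδ1⟩
  have hN : 1 ≤ coverNum (G h) δ := one_le_coverNum hc hδ0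
  have hL : 0 < -Real.log δ := by
    have := Real.log_neg hδ0 (by linarith)
    linarith
  exact div_nonneg (Real.log_nonneg (by exact_mod_cast hN)) (le_of_lt hL)

lemma ev_le_three {h : ℝ → ℝ} (hc : ContinuousOn h (Set.Icc 0 1)) {B : ℝ}
    (hB : ∀ x ∈ Set.Icc (0:ℝ) 1, |h x| ≤ B) (hB1 : 1 ≤ B) :
    ∀ᶠ δ in nhdsWithin (0:ℝ) (Set.Ioi 0),
      Real.log (coverNum (G h) δ) / (-Real.log δ) ≤ 3 := by
  have h3 : ∀ᶠ δ in nhdsWithin (0:ℝ) (Set.Ioi 0), Real.log δ ≤ -(Real.log (8*B)) :=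
    Real.tendsto_log_nhdsGT_zero.eventually_le_atBot _
  filter_upwards [ev_base, h3] with δ ⟨hδ0, hδ1⟩ hlog
  have hL : 0 < -Real.log δ := by
    have := Real.log_neg hδ0 (by linarith)
    linarith
  have hN1 : (1:ℝ) ≤ (coverNum (G h) δ : ℝ) := by exact_mod_cast one_le_coverNum hc hδ0
  have hNu : (coverNum (G h) δ : ℝ) ≤ 8*B/δ^2 := coverNum_upper hc hB hB1 hδ0 (by linarith)
  have hlogN : Real.log (coverNum (G h) δ) ≤ Real.log (8*B) + 2 * (-Real.log δ) := by
    calc Real.log (coverNum (G h) δ) ≤ Real.log (8*B/δ^2) :=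
          Real.log_le_log (by linarith) hNu
      _ = Real.log (8*B) - Real.log (δ^2) := Real.log_div (by positivity) (by positivity)
      _ = Real.log (8*B) - 2 * Real.log δ := by rw [Real.log_pow]; push_cast; ring
      _ = Real.log (8*B) + 2 * (-Real.log δ) := by ring
  rw [div_le_iff₀ hL]
  have hlB : 0 ≤ Real.log (8*B) := Real.log_nonneg (by linarith)
  nlinarith

lemma ev_cover_mul {f g : ℝ → ℝ} (hf : ContinuousOn f (Set.Icc 0 1))
    (hg : ContinuousOn g (Set.Icc 0 1)) {B : ℝ}
    (hBf : ∀ x ∈ Set.Icc (0:ℝ) 1, |f x| ≤ B) (hBg : ∀ x ∈ Set.Icc (0:ℝ) 1, |g x| ≤ B)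
    (hB1 : 1 ≤ B) :
    ∀ᶠ δ in nhdsWithin (0:ℝ) (Set.Ioi 0),
      Real.log (coverNum (G (f*g)) δ) / (-Real.log δ) ≤
        Real.log (2*(4*B+3)) / (-Real.log δ) +
        max (Real.log (coverNum (G f) δ) / (-Real.log δ))
            (Real.log (coverNum (G g) δ) / (-Real.log δ)) := by
  filter_upwards [ev_base] with δ ⟨hδ0, hδ1⟩
  have hL : 0 < -Real.log δ := by
    have := Real.log_neg hδ0 (by linarith); linarith
  set nf : ℝ := (coverNum (G f) δ : ℝ) with hnf
  set ng : ℝ := (coverNum (G g) δ : ℝ) with hng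
  have hnf1 : (1:ℝ) ≤ nf := by rw [hnf]; exact_mod_cast one_le_coverNum hf hδ0
  have hng1 : (1:ℝ) ≤ ng := by rw [hng]; exact_mod_cast one_le_coverNum hg hδ0
  have hmain : (coverNum (G (f*g)) δ : ℝ) ≤ (4*B+3) * (nf + ng) :=
    cover_mul_le hf hg hBf hBg hB1 hδ0
  have hmax : (4*B+3) * (nf + ng) ≤ 2*(4*B+3) * max nf ng := by
    have h1 : nf ≤ max nf ng := le_max_left _ _
    have h2 : ng ≤ max nf ng := le_max_right _ _
    nlinarith
  have hfg1 : (1:ℝ) ≤ (coverNum (G (f*g)) δ : ℝ) := by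
    exact_mod_cast one_le_coverNum (hf.mul hg) hδ0
  have hlog : Real.log (coverNum (G (f*g)) δ) ≤
      Real.log (2*(4*B+3)) + Real.log (max nf ng) := by
    calc Real.log (coverNum (G (f*g)) δ)
        ≤ Real.log (2*(4*B+3) * max nf ng) :=
          Real.log_le_log (by linarith) (le_trans hmain hmax)
      _ = Real.log (2*(4*B+3)) + Real.log (max nf ng) :=
          Real.log_mul (by positivity) (by positivity)
  have hlogmax : Real.log (max nf ng) = max (Real.log nf) (Real.log ng) := by
    rcases le_total nf ng with hle | hle
    · rw [max_eq_right hle, max_eq_right (Real.log_le_log (by linarith) hle)]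
    · rw [max_eq_left hle, max_eq_left (Real.log_le_log (by linarith) hle)]
  rw [div_le_iff₀ hL]
  rw [hlogmax] at hlog
  have hexp : (Real.log (2*(4*B+3)) / (-Real.log δ) +
      max (Real.log nf / (-Real.log δ)) (Real.log ng / (-Real.log δ))) * (-Real.log δ)
      = Real.log (2*(4*B+3)) + max (Real.log nf) (Real.log ng) := by
    rw [max_div_div_right (le_of_lt hL), ← add_div,
      div_mul_cancel₀ _ (ne_of_gt hL)]
  rw [hexp]
  exact hlog


theorem upperBoxDim_graph_mul_le (f g : ℝ → ℝ)
    (hf : ContinuousOn f (Set.Icc 0 1)) (hg : ContinuousOn g (Set.Icc 0 1)) :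
    upperBoxDim (G (f * g)) ≤ max (upperBoxDim (G f)) (upperBoxDim (G g)) := by
  obtain ⟨Cf, hCf⟩ := isCompact_Icc.exists_bound_of_continuousOn hf
  obtain ⟨Cg, hCg⟩ := isCompact_Icc.exists_bound_of_continuousOn hg
  set B : ℝ := max (max Cf Cg) 1 with hB
  have hB1 : 1 ≤ B := le_max_right _ _
  have hBf : ∀ x ∈ Set.Icc (0:ℝ) 1, |f x| ≤ B := fun x hx =>
    le_trans (hCf x hx) (le_trans (le_max_left _ _) (le_max_left _ _))
  have hBg : ∀ x ∈ Set.Icc (0:ℝ) 1, |g x| ≤ B := fun x hx =>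
    le_trans (hCg x hx) (le_trans (le_max_right _ _) (le_max_left _ _))
  set l := nhdsWithin (0:ℝ) (Set.Ioi 0) with hl
  set af : ℝ → ℝ := fun δ => Real.log (coverNum (G f) δ) / -Real.log δ with haf
  set ag : ℝ → ℝ := fun δ => Real.log (coverNum (G g) δ) / -Real.log δ with hag
  set c : ℝ → ℝ := fun δ => Real.log (coverNum (G (f*g)) δ) / -Real.log δ with hc
  have hAf : upperBoxDim (G f) = Filter.limsup af l := rfl
  have hAg : upperBoxDim (G g) = Filter.limsup ag l := rfl
  have hAc : upperBoxDim (G (f*g)) = Filter.limsup c l := rfl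
  set A := Filter.limsup af l with hA
  set D := Filter.limsup ag l with hD
  rw [hAc, hAf, hAg]
  apply le_of_forall_pos_le_add
  intro ε hε
  have hbf : Filter.IsBoundedUnder (· ≤ ·) l af :=
    ⟨3, Filter.eventually_map.2 (ev_le_three hf hBf hB1)⟩
  have hbg : Filter.IsBoundedUnder (· ≤ ·) l ag :=
    ⟨3, Filter.eventually_map.2 (ev_le_three hg hBg hB1)⟩
  have evA : ∀ᶠ δ in l, af δ < A + ε/3 :=
    Filter.eventually_lt_of_limsup_lt (by linarith) hbf
  have evD : ∀ᶠ δ in l, ag δ < D + ε/3 :=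
    Filter.eventually_lt_of_limsup_lt (by linarith) hbg
  have evK : ∀ᶠ δ in l, Real.log (2*(4*B+3)) / (-Real.log δ) ≤ ε/3 := by
    have h3 : ∀ᶠ δ in l, Real.log δ ≤ -(3 * Real.log (2*(4*B+3)) / ε) :=
      Real.tendsto_log_nhdsGT_zero.eventually_le_atBot _
    filter_upwards [ev_base, h3] with δ ⟨hδ0, hδ1⟩ hlog
    have hL : 0 < -Real.log δ := by
      have := Real.log_neg hδ0 (by linarith); linarith
    have hlK : 0 ≤ Real.log (2*(4*B+3)) := Real.log_nonneg (by nlinarith)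
    rw [div_le_iff₀ hL]
    have hLge : 3 * Real.log (2*(4*B+3)) / ε ≤ -Real.log δ := by linarith
    rw [div_le_iff₀ hε] at hLge
    nlinarith
  have evmain : ∀ᶠ δ in l, c δ ≤ max A D + ε := by
    filter_upwards [ev_cover_mul hf hg hBf hBg hB1, evA, evD, evK] with δ hcov h1 h2 h3
    have hmax : max (af δ) (ag δ) ≤ max A D + ε/3 :=
      max_le (le_trans (le_of_lt h1) (by have := le_max_left A D; linarith))
        (le_trans (le_of_lt h2) (by have := le_max_right A D; linarith))
    calc c δ ≤ Real.log (2*(4*B+3)) / (-Real.log δ) + max (af δ) (ag δ) := hcov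
      _ ≤ ε/3 + (max A D + ε/3) := add_le_add h3 hmax
      _ ≤ max A D + ε := by linarith
  exact Filter.limsup_le_of_le
    (Filter.isCoboundedUnder_le_of_eventually_le l (ev_nonneg (hf.mul hg))) evmain
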